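/- Let 0 < p_1 < p_2 be real numbers and let r > 0, and consider the 2 × 2 Loewner matrix L_r. Then det(L_r) > 0 if 0 < r < 1, det(L_r) = 0 if r = 1, and det(L_r) < 0 if r > 1. Consequently L_r always has one positive eigenvalue, and its other eigenvalue is positive, zero, or negative according as 0 < r < 1, r = 1, or r > 1. -/

import Mathlib

open Matrix

/-- The Loewner matrix `L_r` associated with points `p 0, ..., p (n-1)` and exponent `r`:
its `(i,j)` entry is `(p i ^ r - p j ^ r) / (p i - p j)` for `i ≠ j` and `r * p i ^ (r-1)`
for `i = j` (powers are real powers `Real.rpow`). -/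
noncomputable def loewner {n : ℕ} (p : Fin n → ℝ) (r : ℝ) : Matrix (Fin n) (Fin n) ℝ :=
  Matrix.of fun i j => if i = j then r * p i ^ (r - 1) else (p i ^ r - p j ^ r) / (p i - p j)

lemma sinh_mul_lt_aux {r : ℝ} (hr0 : 0 < r) (hr1 : r < 1) {t : ℝ} (ht : 0 < t) :
    Real.sinh (r * t) < r * Real.sinh t := by
  have key : StrictMonoOn (fun x => r * Real.sinh x - Real.sinh (r * x)) (Set.Ici 0) := by
    apply strictMonoOn_of_deriv_pos (convex_Ici 0)
    · fun_prop
    · intro x hx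
      rw [interior_Ici, Set.mem_Ioi] at hx
      have hid : HasDerivAt (fun y : ℝ => r * y) r x := by
        simpa using (hasDerivAt_id x).const_mul r
      have h1 : HasDerivAt (fun x => Real.sinh (r * x)) (Real.cosh (r * x) * r) x :=
        (Real.hasDerivAt_sinh (r * x)).comp x hid
      have h2 : HasDerivAt (fun x => r * Real.sinh x - Real.sinh (r * x))
          (r * Real.cosh x - Real.cosh (r * x) * r) x :=
        ((Real.hasDerivAt_sinh x).const_mul r).sub h1
      rw [h2.deriv]
      have hc : Real.cosh (r * x) < Real.cosh x := by
        apply Real.cosh_strictMonoOn (Set.mem_Ici.2 (by positivity)) (Set.mem_Ici.2 hx.le)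
        nlinarith
      nlinarith
  have h := key (Set.self_mem_Ici) (Set.mem_Ici.2 ht.le) ht
  simp only [Real.sinh_zero, mul_zero, sub_zero] at h
  linarith

lemma sinh_mul_gt_aux {r : ℝ} (hr : 1 < r) {t : ℝ} (ht : 0 < t) :
    r * Real.sinh t < Real.sinh (r * t) := by
  have h := sinh_mul_lt_aux (r := 1 / r) (by positivity)
    (by rw [div_lt_one (by linarith)]; linarith) (t := r * t) (by positivity)
  rw [show (1 / r) * (r * t) = t by field_simp] at h
  calc r * Real.sinh t < r * ((1/r) * Real.sinh (r*t)) := by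
        apply mul_lt_mul_of_pos_left h (by linarith)
    _ = Real.sinh (r * t) := by field_simp

lemma exp_sub_exp (c a b : ℝ) : Real.exp (c * b) - Real.exp (c * a) =
    Real.exp (c * ((a + b) / 2)) * (2 * Real.sinh (c * ((b - a) / 2))) := by
  rw [Real.sinh_eq, show c * b = c * ((a+b)/2) + c * ((b-a)/2) by ring,
    show c * a = c * ((a+b)/2) + -(c * ((b-a)/2)) by ring, Real.exp_add, Real.exp_add]
  ring

lemma det_two (p q r : ℝ) (hp : 0 < p) (hpq : p < q) :
    r * p ^ (r-1) * (r * q ^ (r-1)) - (p ^ r - q ^ r) / (p - q) * ((q ^ r - p ^ r) / (q - p)) =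
    Real.exp ((r-1) * ((Real.log p + Real.log q) / 2)) ^ 2 *
      ((r * Real.sinh ((Real.log q - Real.log p) / 2)) ^ 2 -
        Real.sinh (r * ((Real.log q - Real.log p) / 2)) ^ 2) /
      Real.sinh ((Real.log q - Real.log p) / 2) ^ 2 := by
  have hq : 0 < q := hp.trans hpq
  set a := Real.log p with ha
  set b := Real.log q with hb
  have hab : a < b := Real.log_lt_log hp hpq
  set s : ℝ := (a + b) / 2 with hs
  set t : ℝ := (b - a) / 2 with htdef
  have ht : 0 < t := by simp [htdef]; linarith
  have hsinht : Real.sinh t ≠ 0 := ne_of_gt (by rwa [Real.sinh_pos_iff])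
  have h1 : p ^ r = Real.exp (r * a) := by rw [Real.rpow_def_of_pos hp, ha]; ring_nf
  have h2 : q ^ r = Real.exp (r * b) := by rw [Real.rpow_def_of_pos hq, hb]; ring_nf
  have h3 : p ^ (r-1) = Real.exp ((r-1) * a) := by rw [Real.rpow_def_of_pos hp, ha]; ring_nf
  have h4 : q ^ (r-1) = Real.exp ((r-1) * b) := by rw [Real.rpow_def_of_pos hq, hb]; ring_nf
  have hqp : q - p = Real.exp s * (2 * Real.sinh t) := by
    have := exp_sub_exp 1 a b
    have ea : Real.exp a = p := Real.exp_log hp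
    have eb : Real.exp b = q := Real.exp_log hq
    simpa [ea, eb] using this
  have hqrp : q ^ r - p ^ r = Real.exp (r * s) * (2 * Real.sinh (r * t)) := by
    rw [h1, h2]; simpa using exp_sub_exp r a b
  have hu1 : Real.exp ((r-1) * a) * Real.exp ((r-1) * b) = Real.exp ((r-1) * s) ^ 2 := by
    rw [sq, ← Real.exp_add, ← Real.exp_add]; congr 1; rw [hs]; ring
  have hu2 : Real.exp (r * s) = Real.exp ((r-1) * s) * Real.exp s := by
    rw [← Real.exp_add]; congr 1; ring
  have hE : Real.exp s ≠ 0 := Real.exp_ne_zero s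
  rw [show p ^ r - q ^ r = -(q ^ r - p ^ r) by ring, show p - q = -(q - p) by ring,
    neg_div_neg_eq, hqrp, hqp, h3, h4, hu2]
  field_simp
  linear_combination (r^2 * Real.sinh t^2) * hu1

lemma card_fin2_left {P : Fin 2 → Prop} [DecidablePred P] (h0 : P 0) (h1 : ¬ P 1) :
    Fintype.card {i // P i} = 1 := by
  rw [Fintype.card_eq_one_iff]
  refine ⟨⟨0, h0⟩, ?_⟩
  rintro ⟨i, hi⟩
  apply Subtype.ext
  fin_cases i
  · rfl
  · exact absurd hi h1

lemma card_fin2_right {P : Fin 2 → Prop} [DecidablePred P] (h0 : ¬ P 0) (h1 : P 1) :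
    Fintype.card {i // P i} = 1 := by
  rw [Fintype.card_eq_one_iff]
  refine ⟨⟨1, h1⟩, ?_⟩
  rintro ⟨i, hi⟩
  apply Subtype.ext
  fin_cases i
  · exact absurd hi h0
  · rfl

lemma trace_eq_sum_eig {n : Type*} [Fintype n] [DecidableEq n] {A : Matrix n n ℝ}
    (hA : A.IsHermitian) : A.trace = ∑ i, hA.eigenvalues i := by
  conv_lhs => rw [hA.spectral_theorem, Unitary.conjStarAlgAut_apply]
  rw [Matrix.trace_mul_cycle]
  rw [show (star (hA.eigenvectorUnitary : Matrix n n ℝ)) * (hA.eigenvectorUnitary : Matrix n n ℝ) = 1 from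
    Unitary.coe_star_mul_self hA.eigenvectorUnitary]
  simp [Matrix.trace_diagonal]

/-- For `0 < p 0 < p 1` and `r > 0`, the determinant of the `2 × 2` Loewner matrix
`L_r` is positive for `0 < r < 1`, zero for `r = 1` and negative for `r > 1`.
Consequently `L_r` always has one positive eigenvalue, while the other eigenvalue is
positive, zero, or negative according as `0 < r < 1`, `r = 1`, or `r > 1`. -/
theorem loewner_two_by_two (p : Fin 2 → ℝ) (hp : ∀ i, 0 < p i) (hmono : StrictMono p)
    (r : ℝ) (hr : 0 < r) (hA : (loewner p r).IsHermitian) :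
    ((r < 1 → 0 < (loewner p r).det) ∧
     (r = 1 → (loewner p r).det = 0) ∧
     (1 < r → (loewner p r).det < 0)) ∧
    (∃ i, 0 < hA.eigenvalues i) ∧
    (r < 1 → ∀ i, 0 < hA.eigenvalues i) ∧
    (r = 1 → Fintype.card {i // 0 < hA.eigenvalues i} = 1 ∧
      Fintype.card {i // hA.eigenvalues i = 0} = 1) ∧
    (1 < r → Fintype.card {i // 0 < hA.eigenvalues i} = 1 ∧
      Fintype.card {i // hA.eigenvalues i < 0} = 1) := by
  have hp0 : 0 < p 0 := hp 0
  have h01 : p 0 < p 1 := hmono (by decide)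
  set t : ℝ := (Real.log (p 1) - Real.log (p 0)) / 2 with htdef
  have ht : 0 < t := by
    have := Real.log_lt_log hp0 h01
    simp only [htdef]; linarith
  have hsinht : 0 < Real.sinh t := Real.sinh_pos_iff.2 ht
  have hdet : (loewner p r).det =
      Real.exp ((r-1) * ((Real.log (p 0) + Real.log (p 1)) / 2)) ^ 2 *
        ((r * Real.sinh t) ^ 2 - Real.sinh (r * t) ^ 2) / Real.sinh t ^ 2 := by
    rw [Matrix.det_fin_two]
    have e00 : loewner p r 0 0 = r * p 0 ^ (r-1) := by simp [loewner]
    have e11 : loewner p r 1 1 = r * p 1 ^ (r-1) := by simp [loewner]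
    have e01 : loewner p r 0 1 = (p 0 ^ r - p 1 ^ r) / (p 0 - p 1) := by
      simp [loewner]
    have e10 : loewner p r 1 0 = (p 1 ^ r - p 0 ^ r) / (p 1 - p 0) := by
      simp [loewner]
    rw [e00, e11, e01, e10, ← det_two (p 0) (p 1) r hp0 h01]
  set u : ℝ := Real.exp ((r-1) * ((Real.log (p 0) + Real.log (p 1)) / 2)) with hudef
  have hu : 0 < u := Real.exp_pos _
  have hdet_signs : (r < 1 → 0 < (loewner p r).det) ∧
      (r = 1 → (loewner p r).det = 0) ∧ (1 < r → (loewner p r).det < 0) := by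
    refine ⟨?_, ?_, ?_⟩
    · intro hr1
      rw [hdet]
      have h1 : Real.sinh (r * t) < r * Real.sinh t := sinh_mul_lt_aux hr hr1 ht
      have h2 : 0 < Real.sinh (r * t) := Real.sinh_pos_iff.2 (by positivity)
      have h3 : Real.sinh (r * t) ^ 2 < (r * Real.sinh t) ^ 2 := by nlinarith
      have : 0 < (r * Real.sinh t) ^ 2 - Real.sinh (r * t) ^ 2 := by linarith
      positivity
    · intro hr1
      subst hr1
      rw [hdet, one_mul]
      simp
    · intro hr1
      rw [hdet]
      have h1 : r * Real.sinh t < Real.sinh (r * t) := sinh_mul_gt_aux hr1 ht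
      have h2 : 0 < r * Real.sinh t := by positivity
      have h3 : (r * Real.sinh t) ^ 2 < Real.sinh (r * t) ^ 2 := by nlinarith
      apply div_neg_of_neg_of_pos _ (by positivity)
      apply mul_neg_of_pos_of_neg (by positivity)
      linarith
  have htrace : 0 < (loewner p r).trace := by
    have : (loewner p r).trace = r * p 0 ^ (r-1) + r * p 1 ^ (r-1) := by
      rw [Matrix.trace_fin_two]
      simp [loewner]
    rw [this]
    have h1 : (0:ℝ) < p 0 ^ (r-1) := Real.rpow_pos_of_pos hp0 _
    have h2 : (0:ℝ) < p 1 ^ (r-1) := Real.rpow_pos_of_pos (hp 1) _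
    positivity
  set lam : Fin 2 → ℝ := hA.eigenvalues with hlam
  have hsum : 0 < lam 0 + lam 1 := by
    have := trace_eq_sum_eig hA
    rw [Fin.sum_univ_two] at this
    rw [this] at htrace
    exact htrace
  have hprod : (loewner p r).det = lam 0 * lam 1 := by
    have := hA.det_eq_prod_eigenvalues
    rw [Fin.prod_univ_two] at this
    simpa using this
  refine ⟨hdet_signs, ?_, ?_, ?_, ?_⟩
  · by_contra h
    push_neg at h
    have h0 := h 0
    have h1 := h 1
    linarith
  · intro hr1
    have hd := hdet_signs.1 hr1
    rw [hprod] at hd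
    have hl0 : 0 < lam 0 := by nlinarith
    have hl1 : 0 < lam 1 := by nlinarith
    intro i
    have hi : i = 0 ∨ i = 1 := by omega
    rcases hi with hi | hi <;> rw [hi]
    · exact hl0
    · exact hl1
  · intro hr1
    have hd := hdet_signs.2.1 hr1
    rw [hprod] at hd
    rcases mul_eq_zero.1 hd with h0 | h0
    · have h1 : 0 < lam 1 := by linarith
      exact ⟨card_fin2_right (by simp [h0]) h1, card_fin2_left h0 (by linarith)⟩
    · have h1 : 0 < lam 0 := by linarith
      exact ⟨card_fin2_left h1 (by simp [h0]), card_fin2_right (by linarith) h0⟩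
  · intro hr1
    have hd := hdet_signs.2.2 hr1
    rw [hprod] at hd
    rcases mul_neg_iff.1 hd with ⟨h0, h1⟩ | ⟨h0, h1⟩
    · exact ⟨card_fin2_left h0 (by linarith), card_fin2_right (by linarith) h1⟩
    · exact ⟨card_fin2_right (by linarith) h1, card_fin2_left h0 (by linarith)⟩
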